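/- Let p be an odd prime, let α ∈ ℤ_p be a p-adic unit with −α not a square in ℚ_p, and let x ∈ ℚ_pˣ. For all pairs (s,t), (s',t') ∈ ℚ_p² \ {(0,0)}, the quantities s² + αt², s'² + αt'², s² + αx²t², s'² + αx²t'² are all nonzero, and the cross-ratio r = ((s² + αx²t²)(s'² + αt'²)) / ((s² + αt²)(s'² + αx²t'²)) satisfies min(|x|², |x|⁻²) ≤ |r| ≤ max(|x|², |x|⁻²). Moreover, if |x² − 1| < 1 then |r − 1| ≤ |x² − 1|. (These are the cross-ratio estimates computing the Hilbert distance between the points v_α = (α,0,1) and v₁ = (αx²,0,1) of the hyperbolic disc, the dual points being w = (s², st, t²), w' = (s'², s't', t'²).) -/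

import Mathlib

open Polynomial in
private lemma aux_key {p : ℕ} [Fact p.Prime] (hp : p ≠ 2)
    (α : ℤ_[p]) (hu : IsUnit α) (hns : ¬ IsSquare (-(α : ℚ_[p])))
    (a : ℤ_[p]) : ‖a ^ 2 + α‖ = 1 := by
  have hα : ‖α‖ = 1 := PadicInt.isUnit_iff.mp hu
  have ha1 : ‖a‖ ≤ 1 := PadicInt.norm_le_one a
  by_cases hlt : ‖a‖ < 1
  · have hsq : ‖a ^ 2‖ < 1 := by
      rw [norm_pow]
      calc ‖a‖ ^ 2 ≤ ‖a‖ := by nlinarith [norm_nonneg a]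
      _ < 1 := hlt
    rw [add_comm, PadicInt.norm_add_eq_max_of_ne (by rw [hα]; exact hsq.ne'), hα]
    exact max_eq_left hsq.le
  · have ha : ‖a‖ = 1 := le_antisymm ha1 (not_lt.mp hlt)
    have hle : ‖a ^ 2 + α‖ ≤ 1 := PadicInt.norm_le_one _
    rcases eq_or_lt_of_le hle with h | h
    · exact h
    · exfalso
      set F : Polynomial ℤ_[p] := X ^ 2 + C α with hF
      have hev : ∀ z : ℤ_[p], F.eval z = z ^ 2 + α := by intro z; simp [hF]
      have hdev : ∀ z : ℤ_[p], F.derivative.eval z = 2 * z := by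
        intro z; simp [hF, derivative_pow]
      have h2 : ‖(2 : ℤ_[p])‖ = 1 := by
        refine le_antisymm (PadicInt.norm_le_one _) ?_
        by_contra hc
        have : ‖((2 : ℤ) : ℤ_[p])‖ < 1 := by push_cast; exact not_le.mp hc
        rw [PadicInt.norm_int_lt_one_iff_dvd] at this
        have hpd : p ∣ 2 := by exact_mod_cast this
        exact hp ((Nat.prime_dvd_prime_iff_eq Fact.out Nat.prime_two).mp hpd)
      have hnorm : ‖F.eval a‖ < ‖F.derivative.eval a‖ ^ 2 := by
        rw [hev, hdev, norm_mul, h2, ha]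
        simpa using h
      obtain ⟨z, hz, -⟩ := hensels_lemma hnorm
      rw [Polynomial.coe_aeval_eq_eval, hev] at hz
      apply hns
      refine ⟨(z : ℚ_[p]), ?_⟩
      have : (α : ℚ_[p]) = -((z : ℚ_[p]) ^ 2) := by
        have := congrArg (fun w : ℤ_[p] => (w : ℚ_[p])) hz
        push_cast at this
        linear_combination this
      rw [this]; ring

private lemma aux_form {p : ℕ} [Fact p.Prime] (hp : p ≠ 2)
    (α : ℤ_[p]) (hu : IsUnit α) (hns : ¬ IsSquare (-(α : ℚ_[p])))
    (s t : ℚ_[p]) (h : (s, t) ≠ (0, 0)) :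
    ‖s ^ 2 + (α : ℚ_[p]) * t ^ 2‖ = max ‖s‖ ‖t‖ ^ 2 := by
  have hα : ‖(α : ℚ_[p])‖ = 1 := by
    rw [PadicInt.padic_norm_e_of_padicInt]; exact PadicInt.isUnit_iff.mp hu
  rcases lt_trichotomy ‖s‖ ‖t‖ with hc | hc | hc
  · have hlt : ‖s ^ 2‖ < ‖(α : ℚ_[p]) * t ^ 2‖ := by
      rw [norm_mul, hα, one_mul, norm_pow, norm_pow]
      nlinarith [norm_nonneg s, norm_nonneg t]
    rw [Padic.add_eq_max_of_ne hlt.ne, max_eq_right hlt.le, norm_mul, hα,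
      one_mul, norm_pow, max_eq_right hc.le]
  · have ht : t ≠ 0 := by
      intro h0
      apply h
      have hs : s = 0 := by
        rw [h0, norm_zero] at hc
        exact norm_eq_zero.mp hc
      rw [hs, h0]
    have hnorm1 : ‖s / t‖ ≤ 1 := by
      rw [norm_div, hc, div_self (norm_ne_zero_iff.mpr ht)]
    set a : ℤ_[p] := ⟨s / t, hnorm1⟩ with ha
    have hk := aux_key hp α hu hns a
    have hco : ((a ^ 2 + α : ℤ_[p]) : ℚ_[p]) = (s / t) ^ 2 + (α : ℚ_[p]) := by
      push_cast [ha]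
      rfl
    have heq : s ^ 2 + (α : ℚ_[p]) * t ^ 2 = t ^ 2 * ((s / t) ^ 2 + (α : ℚ_[p])) := by
      field_simp
    rw [heq, norm_mul, norm_pow, ← hco, PadicInt.padic_norm_e_of_padicInt, hk,
      mul_one, hc, max_self]
  · have hlt : ‖(α : ℚ_[p]) * t ^ 2‖ < ‖s ^ 2‖ := by
      rw [norm_mul, hα, one_mul, norm_pow, norm_pow]
      nlinarith [norm_nonneg s, norm_nonneg t]
    rw [add_comm, Padic.add_eq_max_of_ne hlt.ne, max_eq_right hlt.le,
      norm_pow, max_eq_left hc.le]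

private lemma ratio_bound (X a b : ℝ) (hX : 0 < X) (ha : 0 ≤ a) (hb : 0 ≤ b) :
    min 1 X * max a b ≤ max a (X * b) ∧ max a (X * b) ≤ max 1 X * max a b := by
  constructor
  · rcases le_total a b with h | h
    · rw [max_eq_right h]
      calc min 1 X * b ≤ X * b := mul_le_mul_of_nonneg_right (min_le_right 1 X) hb
      _ ≤ max a (X * b) := le_max_right _ _
    · rw [max_eq_left h]
      calc min 1 X * a ≤ 1 * a := mul_le_mul_of_nonneg_right (min_le_left 1 X) ha
      _ = a := one_mul a
      _ ≤ max a (X * b) := le_max_left _ _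
  · apply max_le
    · calc a = 1 * a := (one_mul a).symm
      _ ≤ max 1 X * max a b :=
        mul_le_mul (le_max_left 1 X) (le_max_left a b) ha (le_trans zero_le_one (le_max_left 1 X))
    · exact mul_le_mul (le_max_right 1 X) (le_max_right a b) hb
        (le_trans zero_le_one (le_max_left 1 X))

set_option maxHeartbeats 1000000 in
theorem stmt_11 (p : ℕ) [Fact p.Prime] (hp : p ≠ 2)
    (α : ℤ_[p]) (hu : IsUnit α) (hns : ¬ IsSquare (-(α : ℚ_[p])))
    (x : ℚ_[p]) (hx : x ≠ 0)
    (s t s' t' : ℚ_[p]) (h1 : (s, t) ≠ (0, 0)) (h2 : (s', t') ≠ (0, 0)) :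
    s ^ 2 + (α : ℚ_[p]) * t ^ 2 ≠ 0 ∧
    s' ^ 2 + (α : ℚ_[p]) * t' ^ 2 ≠ 0 ∧
    s ^ 2 + (α : ℚ_[p]) * x ^ 2 * t ^ 2 ≠ 0 ∧
    s' ^ 2 + (α : ℚ_[p]) * x ^ 2 * t' ^ 2 ≠ 0 ∧
    (let r : ℚ_[p] :=
      ((s ^ 2 + (α : ℚ_[p]) * x ^ 2 * t ^ 2) * (s' ^ 2 + (α : ℚ_[p]) * t' ^ 2)) /
        ((s ^ 2 + (α : ℚ_[p]) * t ^ 2) * (s' ^ 2 + (α : ℚ_[p]) * x ^ 2 * t' ^ 2));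
      min (‖x‖ ^ 2) ((‖x‖ ^ 2)⁻¹) ≤ ‖r‖ ∧ ‖r‖ ≤ max (‖x‖ ^ 2) ((‖x‖ ^ 2)⁻¹) ∧
        (‖x ^ 2 - 1‖ < 1 → ‖r - 1‖ ≤ ‖x ^ 2 - 1‖)) := by
  have hα : ‖(α : ℚ_[p])‖ = 1 := by
    rw [PadicInt.padic_norm_e_of_padicInt]; exact PadicInt.isUnit_iff.mp hu
  have hXpos : (0 : ℝ) < ‖x‖ := norm_pos_iff.mpr hx
  have h1' : (s, x * t) ≠ (0, 0) := by
    intro hc; apply h1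
    rw [Prod.mk.injEq] at hc ⊢
    refine ⟨hc.1, ?_⟩
    rcases mul_eq_zero.mp hc.2 with h | h
    · exact absurd h hx
    · exact h
  have h2' : (s', x * t') ≠ (0, 0) := by
    intro hc; apply h2
    rw [Prod.mk.injEq] at hc ⊢
    refine ⟨hc.1, ?_⟩
    rcases mul_eq_zero.mp hc.2 with h | h
    · exact absurd h hx
    · exact h
  have n1 := aux_form hp α hu hns s t h1
  have n2 := aux_form hp α hu hns s' t' h2
  have n3 : ‖s ^ 2 + (α : ℚ_[p]) * x ^ 2 * t ^ 2‖ = max ‖s‖ (‖x‖ * ‖t‖) ^ 2 := by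
    have e3 : s ^ 2 + (α : ℚ_[p]) * x ^ 2 * t ^ 2 = s ^ 2 + (α : ℚ_[p]) * (x * t) ^ 2 := by ring
    rw [e3, aux_form hp α hu hns s (x * t) h1', norm_mul]
  have n4 : ‖s' ^ 2 + (α : ℚ_[p]) * x ^ 2 * t' ^ 2‖ = max ‖s'‖ (‖x‖ * ‖t'‖) ^ 2 := by
    have e4 : s' ^ 2 + (α : ℚ_[p]) * x ^ 2 * t' ^ 2 = s' ^ 2 + (α : ℚ_[p]) * (x * t') ^ 2 := by
      ring
    rw [e4, aux_form hp α hu hns s' (x * t') h2', norm_mul]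
  have hP : ∀ u v : ℚ_[p], (u, v) ≠ (0, 0) → 0 < max ‖u‖ ‖v‖ := by
    intro u v h
    by_contra hc
    push_neg at hc
    apply h
    have hu0 : ‖u‖ = 0 := le_antisymm ((le_max_left _ _).trans hc) (norm_nonneg u)
    have hv0 : ‖v‖ = 0 := le_antisymm ((le_max_right _ _).trans hc) (norm_nonneg v)
    rw [Prod.mk.injEq]
    exact ⟨norm_eq_zero.mp hu0, norm_eq_zero.mp hv0⟩
  have PA : 0 < max ‖s‖ ‖t‖ := hP s t h1
  have PB : 0 < max ‖s'‖ ‖t'‖ := hP s' t' h2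
  have PA' : 0 < max ‖s‖ (‖x‖ * ‖t‖) := by
    have := hP s (x * t) h1'; rwa [norm_mul] at this
  have PB' : 0 < max ‖s'‖ (‖x‖ * ‖t'‖) := by
    have := hP s' (x * t') h2'; rwa [norm_mul] at this
  have nz1 : s ^ 2 + (α : ℚ_[p]) * t ^ 2 ≠ 0 := by
    intro hc; rw [hc, norm_zero] at n1; nlinarith
  have nz2 : s' ^ 2 + (α : ℚ_[p]) * t' ^ 2 ≠ 0 := by
    intro hc; rw [hc, norm_zero] at n2; nlinarith
  have nz3 : s ^ 2 + (α : ℚ_[p]) * x ^ 2 * t ^ 2 ≠ 0 := by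
    intro hc; rw [hc, norm_zero] at n3; nlinarith
  have nz4 : s' ^ 2 + (α : ℚ_[p]) * x ^ 2 * t' ^ 2 ≠ 0 := by
    intro hc; rw [hc, norm_zero] at n4; nlinarith
  set X : ℝ := ‖x‖ with hXdef
  set A : ℝ := max ‖s‖ ‖t‖ with hA
  set B : ℝ := max ‖s'‖ ‖t'‖ with hB
  set A' : ℝ := max ‖s‖ (X * ‖t‖) with hA'
  set B' : ℝ := max ‖s'‖ (X * ‖t'‖) with hB'
  have hr : ‖((s ^ 2 + (α : ℚ_[p]) * x ^ 2 * t ^ 2) * (s' ^ 2 + (α : ℚ_[p]) * t' ^ 2)) /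
      ((s ^ 2 + (α : ℚ_[p]) * t ^ 2) * (s' ^ 2 + (α : ℚ_[p]) * x ^ 2 * t' ^ 2))‖
      = (A' ^ 2 * B ^ 2) / (A ^ 2 * B' ^ 2) := by
    rw [norm_div, norm_mul, norm_mul, n1, n2, n3, n4]
  have LA := ratio_bound X ‖s‖ ‖t‖ hXpos (norm_nonneg s) (norm_nonneg t)
  have LB := ratio_bound X ‖s'‖ ‖t'‖ hXpos (norm_nonneg s') (norm_nonneg t')
  have hDpos : (0 : ℝ) < A ^ 2 * B' ^ 2 := by positivity
  have hinv : X ^ 2 * (X ^ 2)⁻¹ = 1 := mul_inv_cancel₀ (by positivity)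
  refine ⟨nz1, nz2, nz3, nz4, ?_, ?_, ?_⟩
  · -- lower bound
    rw [hr]
    rcases le_total X 1 with hX1 | hX1
    · have hm : min 1 X = X := min_eq_right hX1
      have hM : max 1 X = 1 := max_eq_left hX1
      rw [hm] at LA LB
      rw [hM] at LA LB
      have hX2 : X ^ 2 ≤ 1 := by nlinarith
      have hX2i : 1 ≤ (X ^ 2)⁻¹ := by nlinarith [hinv, inv_nonneg.mpr (sq_nonneg X)]
      have hmin : min (X ^ 2) ((X ^ 2)⁻¹) = X ^ 2 := min_eq_left (by linarith)
      rw [hmin, le_div_iff₀ hDpos]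
      have e1 : X ^ 2 * A ^ 2 ≤ A' ^ 2 := by
        have := pow_le_pow_left₀ (by positivity) LA.1 2
        calc X ^ 2 * A ^ 2 = (X * A) ^ 2 := by ring
        _ ≤ A' ^ 2 := this
      have e2 : B' ^ 2 ≤ B ^ 2 := by
        have h' : B' ≤ B := by rw [← one_mul B]; exact LB.2
        exact pow_le_pow_left₀ PB'.le h' 2
      calc X ^ 2 * (A ^ 2 * B' ^ 2) = (X ^ 2 * A ^ 2) * B' ^ 2 := by ring
      _ ≤ A' ^ 2 * B ^ 2 := mul_le_mul e1 e2 (by positivity) (by positivity)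
    · have hm : min 1 X = 1 := min_eq_left hX1
      have hM : max 1 X = X := max_eq_right hX1
      rw [hm] at LA LB
      rw [hM] at LA LB
      have hX2 : 1 ≤ X ^ 2 := by nlinarith
      have hX2i : (X ^ 2)⁻¹ ≤ 1 := by nlinarith [hinv, inv_nonneg.mpr (sq_nonneg X)]
      have hmin : min (X ^ 2) ((X ^ 2)⁻¹) = (X ^ 2)⁻¹ := min_eq_right (by linarith)
      rw [hmin, le_div_iff₀ hDpos]
      have e1 : A ^ 2 ≤ A' ^ 2 := by
        have h' : A ≤ A' := by rw [← one_mul A]; exact LA.1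
        exact pow_le_pow_left₀ (by positivity) h' 2
      have e2 : B' ^ 2 ≤ X ^ 2 * B ^ 2 := by
        have := pow_le_pow_left₀ (by positivity) LB.2 2
        calc B' ^ 2 ≤ (X * B) ^ 2 := this
        _ = X ^ 2 * B ^ 2 := by ring
      have key : A ^ 2 * B' ^ 2 ≤ X ^ 2 * (A' ^ 2 * B ^ 2) := by
        calc A ^ 2 * B' ^ 2 ≤ A' ^ 2 * (X ^ 2 * B ^ 2) :=
          mul_le_mul e1 e2 (by positivity) (by positivity)
        _ = X ^ 2 * (A' ^ 2 * B ^ 2) := by ring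
      calc (X ^ 2)⁻¹ * (A ^ 2 * B' ^ 2) ≤ (X ^ 2)⁻¹ * (X ^ 2 * (A' ^ 2 * B ^ 2)) :=
        mul_le_mul_of_nonneg_left key (inv_nonneg.mpr (sq_nonneg X))
      _ = (X ^ 2 * (X ^ 2)⁻¹) * (A' ^ 2 * B ^ 2) := by ring
      _ = A' ^ 2 * B ^ 2 := by rw [hinv, one_mul]
  · -- upper bound
    rw [hr]
    rcases le_total X 1 with hX1 | hX1
    · have hm : min 1 X = X := min_eq_right hX1
      have hM : max 1 X = 1 := max_eq_left hX1
      rw [hm] at LA LB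
      rw [hM] at LA LB
      have hX2 : X ^ 2 ≤ 1 := by nlinarith
      have hX2i : 1 ≤ (X ^ 2)⁻¹ := by nlinarith [hinv, inv_nonneg.mpr (sq_nonneg X)]
      have hmax : max (X ^ 2) ((X ^ 2)⁻¹) = (X ^ 2)⁻¹ := max_eq_right (by linarith)
      rw [hmax, div_le_iff₀ hDpos]
      have e1 : A' ^ 2 ≤ A ^ 2 := by
        have h' : A' ≤ A := by rw [← one_mul A]; exact LA.2
        exact pow_le_pow_left₀ (by positivity) h' 2
      have e2 : X ^ 2 * B ^ 2 ≤ B' ^ 2 := by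
        have := pow_le_pow_left₀ (by positivity) LB.1 2
        calc X ^ 2 * B ^ 2 = (X * B) ^ 2 := by ring
        _ ≤ B' ^ 2 := this
      have key : X ^ 2 * (A' ^ 2 * B ^ 2) ≤ A ^ 2 * B' ^ 2 := by
        calc X ^ 2 * (A' ^ 2 * B ^ 2) = A' ^ 2 * (X ^ 2 * B ^ 2) := by ring
        _ ≤ A ^ 2 * B' ^ 2 := mul_le_mul e1 e2 (by positivity) (by positivity)
      calc A' ^ 2 * B ^ 2 = (X ^ 2 * (X ^ 2)⁻¹) * (A' ^ 2 * B ^ 2) := by rw [hinv, one_mul]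
      _ = (X ^ 2)⁻¹ * (X ^ 2 * (A' ^ 2 * B ^ 2)) := by ring
      _ ≤ (X ^ 2)⁻¹ * (A ^ 2 * B' ^ 2) :=
        mul_le_mul_of_nonneg_left key (inv_nonneg.mpr (sq_nonneg X))
    · have hm : min 1 X = 1 := min_eq_left hX1
      have hM : max 1 X = X := max_eq_right hX1
      rw [hm] at LA LB
      rw [hM] at LA LB
      have hX2 : 1 ≤ X ^ 2 := by nlinarith
      have hX2i : (X ^ 2)⁻¹ ≤ 1 := by nlinarith [hinv, inv_nonneg.mpr (sq_nonneg X)]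
      have hmax : max (X ^ 2) ((X ^ 2)⁻¹) = X ^ 2 := max_eq_left (by linarith)
      rw [hmax, div_le_iff₀ hDpos]
      have e1 : A' ^ 2 ≤ X ^ 2 * A ^ 2 := by
        have := pow_le_pow_left₀ (by positivity) LA.2 2
        calc A' ^ 2 ≤ (X * A) ^ 2 := this
        _ = X ^ 2 * A ^ 2 := by ring
      have e2 : B ^ 2 ≤ B' ^ 2 := by
        have h' : B ≤ B' := by rw [← one_mul B]; exact LB.1
        exact pow_le_pow_left₀ (by positivity) h' 2
      calc A' ^ 2 * B ^ 2 ≤ (X ^ 2 * A ^ 2) * B' ^ 2 :=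
        mul_le_mul e1 e2 (by positivity) (by positivity)
      _ = X ^ 2 * (A ^ 2 * B' ^ 2) := by ring
  · -- |r - 1| bound
    intro he
    have hX : X = 1 := by
      have h2 : ‖x ^ 2‖ = 1 := by
        have hx2 : x ^ 2 = (x ^ 2 - 1) + 1 := by ring
        rw [hx2, Padic.add_eq_max_of_ne (by rw [norm_one]; exact he.ne),
          norm_one, max_eq_right he.le]
      rw [norm_pow] at h2
      have hle : X ≤ 1 := by nlinarith
      have hge : 1 ≤ X := by nlinarith
      linarith
    have hBB' : B' = B := by rw [hB', hX, one_mul]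
    have hD : (s ^ 2 + (α : ℚ_[p]) * t ^ 2) * (s' ^ 2 + (α : ℚ_[p]) * x ^ 2 * t' ^ 2) ≠ 0 :=
      mul_ne_zero nz1 nz4
    rw [div_sub_one hD]
    have hND : ((s ^ 2 + (α : ℚ_[p]) * x ^ 2 * t ^ 2) * (s' ^ 2 + (α : ℚ_[p]) * t' ^ 2)) -
        ((s ^ 2 + (α : ℚ_[p]) * t ^ 2) * (s' ^ 2 + (α : ℚ_[p]) * x ^ 2 * t' ^ 2)) =
        (α : ℚ_[p]) * (x ^ 2 - 1) * (t ^ 2 * s' ^ 2 - s ^ 2 * t' ^ 2) := by ring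
    rw [norm_div, hND, norm_mul, norm_mul, hα, one_mul, norm_mul, n1, n4, hBB']
    have hw : ‖t ^ 2 * s' ^ 2 - s ^ 2 * t' ^ 2‖ ≤ A ^ 2 * B ^ 2 := by
      have h0 : ‖t ^ 2 * s' ^ 2 - s ^ 2 * t' ^ 2‖ ≤
          max ‖t ^ 2 * s' ^ 2‖ ‖s ^ 2 * t' ^ 2‖ := by
        rw [sub_eq_add_neg]
        refine (Padic.nonarchimedean _ _).trans ?_
        rw [norm_neg]
      refine h0.trans (max_le ?_ ?_)
      · rw [norm_mul, norm_pow, norm_pow]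
        exact mul_le_mul (pow_le_pow_left₀ (norm_nonneg t) (le_max_right _ _) 2)
          (pow_le_pow_left₀ (norm_nonneg s') (le_max_left _ _) 2) (by positivity) (by positivity)
      · rw [norm_mul, norm_pow, norm_pow]
        exact mul_le_mul (pow_le_pow_left₀ (norm_nonneg s) (le_max_left _ _) 2)
          (pow_le_pow_left₀ (norm_nonneg t') (le_max_right _ _) 2) (by positivity) (by positivity)
    rw [div_le_iff₀ (by positivity)]
    calc ‖x ^ 2 - 1‖ * ‖t ^ 2 * s' ^ 2 - s ^ 2 * t' ^ 2‖ ≤ ‖x ^ 2 - 1‖ * (A ^ 2 * B ^ 2) :=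
      mul_le_mul_of_nonneg_left hw (norm_nonneg _)
    _ = ‖x ^ 2 - 1‖ * (A ^ 2 * B ^ 2) := rfl
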